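/- Let K be a commutative ring with (−1 : K) ≠ (1 : K), G a group, ε : G →* Kˣ a sign character with values regarded in K, and M a module over the group algebra K[G]. Fix m ∈ M, and let A and B be finite subgroups of G. Write AB = {ab : a ∈ A, b ∈ B} for the (finite) product set. Suppose there is a bijection f : AB → AB satisfying: for each w ∈ AB there exists ρ_w ∈ G with ρ_w² = e, ε(ρ_w) = −1, f(w) = w·ρ_w, ρ_w • m = m, and f(f(w)) = w. Then (∑_{σ ∈ A} ε(σ)·σ) • ((∑_{τ ∈ B} ε(τ)·τ) • m) = 0 in M. -/

import Mathlib

open Pointwise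

/-- Abstract form of Lemma 3.1 of the paper: if the product set `AB` of two finite subgroups
`A`, `B` of `G` carries a bijection `f` with `f(w) = w·ρ_w`, `ρ_w² = e`, `ε(ρ_w) = -1`,
`ρ_w • m = m` and `f(f(w)) = w`, then the signed sum over `A` annihilates the signed sum
over `B` applied to `m`:
`(∑_{σ ∈ A} ε(σ)·σ) • ((∑_{τ ∈ B} ε(τ)·τ) • m) = 0`. -/
theorem garnir_lemma_3_1 (K : Type*) [CommRing K] (G : Type*) [Group G]
    (M : Type*) [AddCommGroup M] [Module K M] [Module (MonoidAlgebra K G) M]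
    [IsScalarTower K (MonoidAlgebra K G) M]
    (ε : G →* Kˣ) (m : M) (A B : Subgroup G) [Fintype A] [Fintype B]
    (f : ↥((A : Set G) * (B : Set G)) → ↥((A : Set G) * (B : Set G)))
    (hf : Function.Bijective f)
    (h : ∀ w : ↥((A : Set G) * (B : Set G)), ∃ ρ : G,
      ρ * ρ = 1 ∧ ((ε ρ : K) = -1) ∧ ((f w : G) = (w : G) * ρ) ∧
        (MonoidAlgebra.of K G ρ) • m = m ∧ f (f w) = w)
    (hK : (-1 : K) ≠ 1) :
    (∑ σ : A, MonoidAlgebra.single (σ : G) ((ε (σ : G) : Kˣ) : K)) •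
        ((∑ τ : B, MonoidAlgebra.single (τ : G) ((ε (τ : G) : Kˣ) : K)) • m) = 0 := by
  classical
  have hfin : ((A : Set G) * (B : Set G)).Finite :=
    Set.Finite.mul (Set.toFinite _) (Set.toFinite _)
  set S : Finset G := hfin.toFinset with hS
  set t : G → M := fun w => (MonoidAlgebra.single w ((ε w : Kˣ) : K)) • m with ht
  -- Step 1: the LHS is a sum over pairs
  have step1 :
      (∑ σ : A, MonoidAlgebra.single (σ : G) ((ε (σ : G) : Kˣ) : K)) •
        ((∑ τ : B, MonoidAlgebra.single (τ : G) ((ε (τ : G) : Kˣ) : K)) • m)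
      = ∑ p : A × B, t ((p.1 : G) * (p.2 : G)) := by
    rw [smul_smul, Finset.sum_mul_sum, Fintype.sum_prod_type]
    rw [Finset.sum_smul]
    refine Finset.sum_congr rfl fun σ _ => ?_
    rw [Finset.sum_smul]
    refine Finset.sum_congr rfl fun τ _ => ?_
    simp [ht, MonoidAlgebra.single_mul_single, map_mul]
  rw [step1]
  -- the fibers of the multiplication map
  set F : G → Finset (A × B) :=
    fun w => Finset.univ.filter (fun p : A × B => (p.1 : G) * (p.2 : G) = w) with hF
  -- fibers over elements of AB all have the same cardinality
  have hcard : ∀ w ∈ S, ∀ w' ∈ S, (F w).card = (F w').card := by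
    intro w hw w' hw'
    rw [hS, Set.Finite.mem_toFinset] at hw hw'
    obtain ⟨a, ha, b, hb, hab⟩ := hw
    obtain ⟨a', ha', b', hb', hab'⟩ := hw'
    refine Finset.card_bij'
      (fun p _ => (⟨a' * a⁻¹ * (p.1 : G), mul_mem (mul_mem ha' (inv_mem ha)) p.1.2⟩,
        ⟨(p.2 : G) * b⁻¹ * b', mul_mem (mul_mem p.2.2 (inv_mem hb)) hb'⟩))
      (fun p _ => (⟨a * a'⁻¹ * (p.1 : G), mul_mem (mul_mem ha (inv_mem ha')) p.1.2⟩,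
        ⟨(p.2 : G) * b'⁻¹ * b, mul_mem (mul_mem p.2.2 (inv_mem hb')) hb⟩))
      ?_ ?_ ?_ ?_
    · intro p hp
      simp only [hF, Finset.mem_filter] at hp ⊢
      refine ⟨Finset.mem_univ _, ?_⟩
      have hp2 := hp.2
      calc a' * a⁻¹ * (p.1 : G) * ((p.2 : G) * b⁻¹ * b')
          = a' * a⁻¹ * ((p.1 : G) * (p.2 : G)) * b⁻¹ * b' := by group
        _ = w' := by rw [hp2, ← hab, ← hab']; group
    · intro p hp
      simp only [hF, Finset.mem_filter] at hp ⊢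
      refine ⟨Finset.mem_univ _, ?_⟩
      have hp2 := hp.2
      calc a * a'⁻¹ * (p.1 : G) * ((p.2 : G) * b'⁻¹ * b)
          = a * a'⁻¹ * ((p.1 : G) * (p.2 : G)) * b'⁻¹ * b := by group
        _ = w := by rw [hp2, ← hab, ← hab']; group
    · intro p hp
      ext
      · show a * a'⁻¹ * (a' * a⁻¹ * (p.1 : G)) = (p.1 : G)
        group
      · show (p.2 : G) * b⁻¹ * b' * b'⁻¹ * b = (p.2 : G)
        group
    · intro p hp
      ext
      · show a' * a⁻¹ * (a * a'⁻¹ * (p.1 : G)) = (p.1 : G)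
        group
      · show (p.2 : G) * b'⁻¹ * b * b⁻¹ * b' = (p.2 : G)
        group
  -- Step 2: group the pair-sum by fibers
  have step2 : ∑ p : A × B, t ((p.1 : G) * (p.2 : G))
      = ∑ w ∈ S, (F w).card • t w := by
    rw [← Finset.sum_fiberwise_of_maps_to' (t := S)
      (g := fun p : A × B => (p.1 : G) * (p.2 : G)) ?_ t]
    · refine Finset.sum_congr rfl fun w _ => ?_
      rw [Finset.sum_const]
    · intro p _
      rw [hS, Set.Finite.mem_toFinset]
      exact Set.mul_mem_mul p.1.2 p.2.2
  rw [step2]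
  -- Step 3: cancellation by the involution f
  have hmem : ∀ w ∈ S, w ∈ ((A : Set G) * (B : Set G)) := by
    intro w hw; rwa [hS, Set.Finite.mem_toFinset] at hw
  have g_mem : ∀ w (hw : w ∈ S), ((f ⟨w, hmem w hw⟩ : G)) ∈ S := by
    intro w hw
    rw [hS, Set.Finite.mem_toFinset]
    exact (f ⟨w, hmem w hw⟩).2
  refine Finset.sum_involution (fun w hw => (f ⟨w, hmem w hw⟩ : G)) ?_ ?_ g_mem ?_
  · -- cancellation
    intro w hw
    obtain ⟨ρ, hρ2, hρε, hfw, hρm, hff⟩ := h ⟨w, hmem w hw⟩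
    have hteq : t ((f ⟨w, hmem w hw⟩ : G)) = - t w := by
      rw [hfw, ht]
      simp only
      have h1 : ((ε (w * ρ) : Kˣ) : K) = -((ε w : Kˣ) : K) := by
        rw [map_mul, Units.val_mul, hρε, mul_neg_one]
      rw [h1]
      have h2 : MonoidAlgebra.single (w * ρ) (-((ε w : Kˣ) : K))
          = -(MonoidAlgebra.single w ((ε w : Kˣ) : K) * MonoidAlgebra.of K G ρ) := by
        rw [MonoidAlgebra.of_apply, MonoidAlgebra.single_mul_single, mul_one]
        exact MonoidAlgebra.single_neg _ _
      rw [h2, neg_smul, mul_smul, hρm]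
    rw [hteq, smul_neg]
    rw [hcard _ (g_mem w hw) _ hw]
    exact add_neg_cancel _
  · -- no fixed points
    intro w hw _
    obtain ⟨ρ, hρ2, hρε, hfw, hρm, hff⟩ := h ⟨w, hmem w hw⟩
    rw [hfw]
    intro hcon
    have hρ1 : ρ = 1 := by
      have h1 : w * ρ = w * 1 := by rw [mul_one]; exact hcon
      exact mul_left_cancel h1
    rw [hρ1, map_one, Units.val_one] at hρε
    exact hK hρε.symm
  · -- involution
    intro w hw
    have : (⟨(f ⟨w, hmem w hw⟩ : G), hmem _ (g_mem w hw)⟩ :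
        ↥((A : Set G) * (B : Set G))) = f ⟨w, hmem w hw⟩ := rfl
    rw [this]
    obtain ⟨ρ, hρ2, hρε, hfw, hρm, hff⟩ := h ⟨w, hmem w hw⟩
    rw [hff]
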